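/- Let D be the self-adjoint operator on ℓ²(ℤ) given by (D f)(j) = j·f(j) with domain dom D = {f ∈ ℓ²(ℤ) : Σ_{j∈ℤ} j²·|f(j)|² < ∞}, and let ε_j denote the standard orthonormal basis vectors of ℓ²(ℤ). Let n ≥ 1, let x be a bounded operator on ℓ²(ℤ), and let y : ℕ → B(ℓ²(ℤ)) satisfy y 0 = x and, for every k < n: y k maps dom D into dom D and y (k+1) h = i·(D(y k h) − y k (D h)) for all h ∈ dom D (so x is n-times weakly D-differentiable with (δ^D_w)^k(x) = y k). If y n = 0, then x is a diagonal operator: there exists a bounded function g : ℤ → ℂ such that x ε_j = g(j)·ε_j for every j ∈ ℤ. That is, ker (δ^D_w)^n = diag(ℓ^∞(ℤ)). -/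

import Mathlib

open scoped InnerProductSpace

noncomputable section

/-- The domain of the diagonal operator `D` on `ℓ²(ℤ)`: the sequences `f ∈ ℓ²(ℤ)` with
`Σ_{j ∈ ℤ} j² |f j|² < ∞`. -/
def diagDomain : Submodule ℂ (lp (fun _ : ℤ => ℂ) 2) where
  carrier := {f | Memℓp (fun j : ℤ => (j : ℂ) * f j) 2}
  zero_mem' := by
    show Memℓp (fun j : ℤ => (j : ℂ) * (0 : lp (fun _ : ℤ => ℂ) 2) j) 2
    convert (zero_memℓp : Memℓp (0 : ∀ _ : ℤ, ℂ) 2) using 1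
    funext j
    simp
  add_mem' := by
    intro f g hf hg
    show Memℓp (fun j : ℤ => (j : ℂ) * (f + g) j) 2
    have h : (fun j : ℤ => (j : ℂ) * (f + g) j)
        = (fun j : ℤ => (j : ℂ) * f j) + fun j : ℤ => (j : ℂ) * g j := by
      funext j
      simp [lp.coeFn_add, mul_add]
    rw [h]
    exact hf.add hg
  smul_mem' := by
    intro c f hf
    show Memℓp (fun j : ℤ => (j : ℂ) * (c • f) j) 2
    have h : (fun j : ℤ => (j : ℂ) * (c • f) j)
        = fun j : ℤ => c * ((j : ℂ) * f j) := by
      funext j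
      simp [lp.coeFn_smul, Pi.smul_apply, smul_eq_mul]
      ring
    rw [h]
    exact hf.const_mul c

/-- The self-adjoint diagonal operator `(D f) j = j • f j` on `ℓ²(ℤ)`, as a densely defined
unbounded operator (`LinearPMap`) with domain `{f : Σ j² |f j|² < ∞}`. -/
def diagOp : lp (fun _ : ℤ => ℂ) 2 →ₗ.[ℂ] lp (fun _ : ℤ => ℂ) 2 where
  domain := diagDomain
  toFun :=
    { toFun := fun f => (⟨fun j : ℤ => (j : ℂ) * (f : lp (fun _ : ℤ => ℂ) 2) j, f.2⟩ :
        lp (fun _ : ℤ => ℂ) 2)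
      map_add' := by
        intro f g
        ext j
        simp [lp.coeFn_add, mul_add]
        rfl
      map_smul' := by
        intro c f
        ext j
        simp [lp.coeFn_smul, Pi.smul_apply, smul_eq_mul]
        ring }

end

lemma single_mem_diagDomain (j : ℤ) :
    (lp.single 2 j (1:ℂ) : lp (fun _ : ℤ => ℂ) 2) ∈ diagOp.domain := by
  show Memℓp (fun i : ℤ => (i : ℂ) * (lp.single 2 j (1:ℂ) : lp (fun _ : ℤ => ℂ) 2) i) 2
  have h : (fun i : ℤ => (i : ℂ) * (lp.single 2 j (1:ℂ) : lp (fun _ : ℤ => ℂ) 2) i)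
      = fun i : ℤ => (j : ℂ) * (lp.single 2 j (1:ℂ) : lp (fun _ : ℤ => ℂ) 2) i := by
    funext i
    rcases eq_or_ne i j with rfl | hij
    · rfl
    · simp [lp.single_apply_ne _ _ _ hij, Pi.single_apply, hij]
  rw [h]
  exact Memℓp.const_mul (lp.memℓp _) _

lemma diagOp_apply_coe (f : diagOp.domain) (i : ℤ) :
    (diagOp f : lp (fun _ : ℤ => ℂ) 2) i = (i : ℂ) * (f : lp (fun _ : ℤ => ℂ) 2) i := rfl

lemma diagOp_single (j : ℤ) :
    diagOp ⟨lp.single 2 j (1:ℂ), single_mem_diagDomain j⟩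
      = (j : ℂ) • (lp.single 2 j (1:ℂ) : lp (fun _ : ℤ => ℂ) 2) := by
  ext i
  rw [diagOp_apply_coe]
  rcases eq_or_ne i j with rfl | hij
  · simp [lp.coeFn_smul, Pi.smul_apply, smul_eq_mul]
  · simp [lp.coeFn_smul, Pi.smul_apply, smul_eq_mul, lp.single_apply_ne _ _ _ hij, Pi.single_apply, hij]
/-- **Example 2.9(d) of the paper.** Let `D` be the diagonal operator `(D f) j = j • f j` on
`ℓ²(ℤ)`.  If `x` is `n`-times weakly `D`-differentiable (`n ≥ 1`) with iterated weak
derivatives `y k = (δ^D_w)^k(x)` and `(δ^D_w)^n(x) = 0`, then `x` is a diagonal operator: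
there is a bounded `g : ℤ → ℂ` with `x ε_j = g j • ε_j` for every standard basis vector
`ε_j`.  That is, `ker (δ^D_w)^n = diag(ℓ^∞(ℤ))`. -/
theorem ker_iter_diag_eq_diagonal (n : ℕ) (hn : 1 ≤ n)
    (x : lp (fun _ : ℤ => ℂ) 2 →L[ℂ] lp (fun _ : ℤ => ℂ) 2)
    (y : ℕ → (lp (fun _ : ℤ => ℂ) 2 →L[ℂ] lp (fun _ : ℤ => ℂ) 2))
    (hy0 : y 0 = x)
    (hmap : ∀ k, k < n → ∀ h : diagOp.domain, y k h ∈ diagOp.domain)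
    (hder : ∀ k (hk : k < n) (h : diagOp.domain),
      y (k + 1) ((h : lp (fun _ : ℤ => ℂ) 2))
        = Complex.I • (diagOp ⟨y k h, hmap k hk h⟩ - y k (diagOp h)))
    (hker : y n = 0) :
    ∃ g : ℤ → ℂ, (∃ C : ℝ, ∀ j, ‖g j‖ ≤ C) ∧
      ∀ j : ℤ, x (lp.single 2 j 1) = g j • lp.single 2 j 1 := by
  have hmemε : ∀ j : ℤ, (lp.single 2 j (1:ℂ) : lp (fun _ : ℤ => ℂ) 2) ∈ diagOp.domain :=
    single_mem_diagDomain
  have key : ∀ k, k ≤ n → ∀ i j : ℤ,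
      (y k (lp.single 2 j 1)) i
        = (Complex.I * ((i : ℂ) - j)) ^ k * (x (lp.single 2 j 1)) i := by
    intro k
    induction k with
    | zero => intro _ i j; simp [hy0]
    | succ k ih =>
      intro hk i j
      have hkn : k < n := hk
      have h1 := hder k hkn ⟨lp.single 2 j 1, hmemε j⟩
      have h2 : y k ((diagOp ⟨lp.single 2 j 1, hmemε j⟩ : lp (fun _ : ℤ => ℂ) 2))
          = (j : ℂ) • y k (lp.single 2 j 1) := by
        rw [diagOp_single, map_smul]
      have h3 := congrFun (congrArg (fun f : lp (fun _ : ℤ => ℂ) 2 => (f : ∀ _ : ℤ, ℂ)) h1) i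
      simp only at h3
      rw [h3]
      rw [lp.coeFn_smul, Pi.smul_apply, lp.coeFn_sub, Pi.sub_apply, h2,
        lp.coeFn_smul, Pi.smul_apply]
      rw [diagOp_apply_coe]
      have h4 : ((⟨y k (lp.single 2 j 1), hmap k hkn ⟨lp.single 2 j 1, hmemε j⟩⟩ :
          diagOp.domain) : lp (fun _ : ℤ => ℂ) 2) i = (y k (lp.single 2 j 1)) i := rfl
      rw [h4, ih (le_of_lt hkn) i j]
      simp only [smul_eq_mul]
      ring
  refine ⟨fun j => (x (lp.single 2 j 1)) j, ⟨‖x‖, ?_⟩, ?_⟩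
  · intro j
    have h1 : ‖(x (lp.single 2 j 1)) j‖ ≤ ‖x (lp.single 2 j 1)‖ :=
      lp.norm_apply_le_norm two_ne_zero _ j
    have h2 : ‖x (lp.single 2 j 1)‖ ≤ ‖x‖ * ‖(lp.single 2 j 1 : lp (fun _ : ℤ => ℂ) 2)‖ :=
      x.le_opNorm _
    have h3 : ‖(lp.single 2 j (1:ℂ) : lp (fun _ : ℤ => ℂ) 2)‖ = 1 := by
      have := lp.norm_single (E := fun _ : ℤ => ℂ) (p := 2) (by norm_num) j (1:ℂ)
      simpa using this
    rw [h3, mul_one] at h2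
    exact h1.trans h2
  · intro j
    ext i
    rcases eq_or_ne i j with rfl | hij
    · rw [lp.coeFn_smul, Pi.smul_apply, smul_eq_mul, lp.single_apply_self, mul_one]
    · have h0 := key n le_rfl i j
      rw [hker] at h0
      simp only [ContinuousLinearMap.zero_apply, lp.coeFn_zero, Pi.zero_apply] at h0
      have hne : (Complex.I * ((i : ℂ) - j)) ^ n ≠ 0 := by
        apply pow_ne_zero
        apply mul_ne_zero Complex.I_ne_zero
        rw [sub_ne_zero]
        exact_mod_cast hij
      have hx0 : (x (lp.single 2 j 1)) i = 0 :=
        (mul_eq_zero.mp h0.symm).resolve_left hne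
      rw [hx0, lp.coeFn_smul, Pi.smul_apply, lp.single_apply_ne _ _ _ hij, smul_zero]
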